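/- arXiv:1206.4853 — 2 statements merged into one kernel-verified Lean document; each statement's English description precedes it below -/
import Mathlib

section
/- For every d ≥ 2 there is a constant C_d, depending only on d, such that for all ε ∈ (0,1) and all N ∈ ℕ, the Lebesgue measure of the set { α ∈ 𝕋^d : there exists k ∈ ℤ^d∖{0} with |k|² < ε^{(d+4)/(d−1)} N^{2/d} and |k|^{(d+1)/2} |{k,α}| < ε^{−d/4} N^{−(d−1)/(2d)} } is at most C_d ε. -/
open MeasureTheory Filter Pointwise
open scoped ENNReal RealInnerProductSpace Real

noncomputable section

abbrev Torus (d : ℕ) := Fin d → AddCircle (1 : ℝ)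

def torusProj {d : ℕ} (v : EuclideanSpace ℝ (Fin d)) : Torus d :=
  fun i => (v i : AddCircle (1 : ℝ))

def suppFn {d : ℕ} (C : Set (EuclideanSpace ℝ (Fin d))) (t : EuclideanSpace ℝ (Fin d)) : ℝ :=
  sSup ((fun x => (inner ℝ t x : ℝ)) '' C)

structure StrictlyConvexAnalyticBody (d : ℕ) where
  carrier : Set (EuclideanSpace ℝ (Fin d))
  isCompact : IsCompact carrier
  convex : Convex ℝ carrier
  nonemptyInterior : (interior carrier).Nonempty
  strictConvex : StrictConvex ℝ carrier
  analyticSupport : AnalyticOnNhd ℝ (suppFn carrier) {(0 : EuclideanSpace ℝ (Fin d))}ᶜ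
  posCurvature : ∀ t w : EuclideanSpace ℝ (Fin d), t ≠ 0 → w ≠ 0 → (inner ℝ t w : ℝ) = 0 →
    0 < iteratedDeriv 2 (fun s : ℝ => suppFn carrier (t + s • w)) 0

def discrepancy (d : ℕ) (C : Set (EuclideanSpace ℝ (Fin d))) (r : ℝ)
    (α x : Torus d) (N : ℕ) : ℝ :=
  (∑ n ∈ Finset.range N,
    Set.indicator (torusProj '' (r • C)) (fun _ => (1:ℝ)) (x + n • α))
    - N * (volume (r • C)).toReal

def lamMeasure (d : ℕ) (a b : ℝ) : Measure (ℝ × Torus d × Torus d) :=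
  ((volume (Set.Icc a b))⁻¹ • volume.restrict (Set.Icc a b)).prod
    ((volume : Measure (Torus d)).prod (volume : Measure (Torus d)))


def cube (d : ℕ) : Set (EuclideanSpace ℝ (Fin d)) := {x | ∀ i, x i ∈ Set.Ico (0:ℝ) 1}

/-- The representative of `t` modulo 1 lying in `(-1/2, 1/2]`. -/
def bracket (t : ℝ) : ℝ := t - ⌈t - 1/2⌉

def znorm {d : ℕ} (k : Fin d → ℤ) : ℝ := Real.sqrt (∑ i, ((k i : ℝ))^2)

def dotZ {d : ℕ} (k : Fin d → ℤ) (x : EuclideanSpace ℝ (Fin d)) : ℝ := ∑ i, (k i : ℝ) * x i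

/-- `c_k(r) = 2 r^{-(d-1)/2} ∫_{C_r} cos(2π(k,x)) dx`. -/
def ckCoeff (d : ℕ) (C : Set (EuclideanSpace ℝ (Fin d))) (r : ℝ) (k : Fin d → ℤ) : ℝ :=
  2 * r ^ (-(((d:ℝ)-1)/2)) * ∫ x in r • C, Real.cos (2 * Real.pi * dotZ k x)

/-- The resonant term `f(r,α,x,N,k)`. -/
def fterm (d : ℕ) (C : Set (EuclideanSpace ℝ (Fin d))) (r : ℝ)
    (α x : EuclideanSpace ℝ (Fin d)) (N : ℕ) (k : Fin d → ℤ) : ℝ :=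
  ckCoeff d C r k *
    Real.cos (2 * Real.pi * dotZ k x + Real.pi * ((N:ℝ)-1) * bracket (dotZ k α)) *
    Real.sin (Real.pi * (N:ℝ) * bracket (dotZ k α)) /
    ((N:ℝ) ^ (((d:ℝ)-1)/(2*(d:ℝ))) * Real.sin (Real.pi * bracket (dotZ k α)))



section Aux

def Lmap (d : ℕ) (k : Fin d → ℤ) (i₀ : Fin d) : EuclideanSpace ℝ (Fin d) →ₗ[ℝ] EuclideanSpace ℝ (Fin d) where
  toFun α := WithLp.toLp 2 (fun i => if i = i₀ then dotZ k α else α i)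
  map_add' α β := by
    ext i
    by_cases h : i = i₀ <;> simp [h, dotZ, mul_add, Finset.sum_add_distrib]
  map_smul' c α := by
    ext i
    by_cases h : i = i₀ <;> simp [h, dotZ, Finset.mul_sum] <;> ring_nf
    · congr 1; funext j; ring



lemma Lmap_det (d : ℕ) (k : Fin d → ℤ) (i₀ : Fin d) :
    LinearMap.det (Lmap d k i₀) = (k i₀ : ℝ) := by
  classical
  let b := (EuclideanSpace.basisFun (Fin d) ℝ).toBasis
  rw [← LinearMap.det_toMatrix b]
  have : LinearMap.toMatrix b b (Lmap d k i₀)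
      = (1 : Matrix (Fin d) (Fin d) ℝ).updateRow i₀ (fun j => (k j : ℝ)) := by
    ext i j
    rw [LinearMap.toMatrix_apply]
    by_cases h : i = i₀
    · simp [h, Lmap, b, dotZ, EuclideanSpace.basisFun_apply, EuclideanSpace.single_apply,
        Matrix.updateRow_apply, Matrix.one_apply, eq_comm]
    · have h' : i₀ ≠ i := fun hh => h hh.symm
      simp [h, h', Lmap, b, dotZ, EuclideanSpace.basisFun_apply, EuclideanSpace.single_apply,
        Matrix.updateRow_apply, Matrix.one_apply, eq_comm]
  rw [this]
  have hv : (fun j => (k j : ℝ)) = ∑ m, (fun j => (k j : ℝ)) m • (1 : Matrix (Fin d) (Fin d) ℝ) m := by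
    funext j
    simp [Matrix.one_apply, Finset.sum_ite_eq, Pi.smul_apply, Finset.sum_apply]
  rw [hv, Matrix.det_updateRow_sum]
  simp

lemma volume_cubePre (d : ℕ) :
    volume {α : EuclideanSpace ℝ (Fin d) | ∀ i, α i ∈ Set.Ico (0:ℝ) 1} = 1 := by
  have h : {α : EuclideanSpace ℝ (Fin d) | ∀ i, α i ∈ Set.Ico (0:ℝ) 1}
      = (MeasurableEquiv.toLp 2 (Fin d → ℝ)).symm ⁻¹' (Set.pi Set.univ fun _ => Set.Ico (0:ℝ) 1) := by
    ext α; simp [Set.mem_pi, MeasurableEquiv.coe_toLp_symm]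
  rw [h, (EuclideanSpace.volume_preserving_symm_measurableEquiv_toLp (Fin d)).measure_preimage
    ((MeasurableSet.univ_pi fun _ => measurableSet_Ico).nullMeasurableSet),
    volume_pi_pi]
  simp

lemma core_measure (d : ℕ) (hd : 1 ≤ d) (k : Fin d → ℤ) (hk : k ≠ 0) (δ : ℝ) (hδ : 0 ≤ δ) :
    volume {α : EuclideanSpace ℝ (Fin d) | α ∈ cube d ∧ |bracket (dotZ k α)| < δ}
      ≤ ENNReal.ofReal (10 * d * δ) := by
  classical
  -- choose i₀ maximizing |k i|
  obtain ⟨i₀, -, hi₀⟩ := Finset.exists_max_image (Finset.univ : Finset (Fin d)) (fun i => |k i|)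
    ⟨⟨0, hd⟩, Finset.mem_univ _⟩
  obtain ⟨j, hj⟩ : ∃ j, k j ≠ 0 := by
    by_contra h; push_neg at h; exact hk (funext h)
  have hki₀ : 1 ≤ |k i₀| := le_trans (Int.one_le_abs hj) (hi₀ j (Finset.mem_univ j))
  have hki₀' : (k i₀ : ℝ) ≠ 0 := by
    have : k i₀ ≠ 0 := by intro h; rw [h] at hki₀; norm_num at hki₀
    exact_mod_cast this
  set M : ℤ := ∑ i, |k i| with hM
  have hM1 : 1 ≤ M := le_trans hki₀ (Finset.single_le_sum (f := fun i => |k i|)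
    (fun i _ => abs_nonneg _) (Finset.mem_univ i₀))
  have hMd : M ≤ d * |k i₀| := by
    calc M ≤ ∑ _i : Fin d, |k i₀| := Finset.sum_le_sum fun i _ => hi₀ i (Finset.mem_univ i)
    _ = d * |k i₀| := by simp [mul_comm]
  have hd' : (1:ℝ) ≤ d := by exact_mod_cast hd
  by_cases hhalf : (2⁻¹ : ℝ) ≤ δ
  · calc volume {α : EuclideanSpace ℝ (Fin d) | α ∈ cube d ∧ |bracket (dotZ k α)| < δ}
        ≤ volume {α : EuclideanSpace ℝ (Fin d) | ∀ i, α i ∈ Set.Ico (0:ℝ) 1} :=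
          measure_mono fun α hα => hα.1
    _ = 1 := volume_cubePre d
    _ ≤ ENNReal.ofReal (10 * d * δ) := by
        rw [show (1 : ℝ≥0∞) = ENNReal.ofReal 1 by simp]
        apply ENNReal.ofReal_le_ofReal
        nlinarith
  · push_neg at hhalf
    set B : Set ℝ := ⋃ n ∈ Finset.Icc (-(M+1)) (M+1), Set.Ioo ((n:ℝ)-δ) ((n:ℝ)+δ) with hB
    set box : Set (Fin d → ℝ) := Set.pi Set.univ (fun i => if i = i₀ then B else Set.Ico (0:ℝ) 1)
      with hbox
    have hBmeas : MeasurableSet B :=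
      (Finset.Icc (-(M+1)) (M+1)).measurableSet_biUnion fun _ _ => measurableSet_Ioo
    have hboxmeas : MeasurableSet box := MeasurableSet.univ_pi fun i => by
      by_cases h : i = i₀ <;> simp [h, hBmeas, measurableSet_Ico]
    -- inclusion
    have hsub : {α : EuclideanSpace ℝ (Fin d) | α ∈ cube d ∧ |bracket (dotZ k α)| < δ}
        ⊆ (Lmap d k i₀) ⁻¹' ((MeasurableEquiv.toLp 2 (Fin d → ℝ)).symm ⁻¹' box) := by
      rintro α ⟨hcube, hbr⟩
      intro i _
      show (Lmap d k i₀ α) i ∈ _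
      by_cases h : i = i₀
      · subst h
        show (if i = i then dotZ k α else α i) ∈ (if i = i then B else Set.Ico (0:ℝ) 1)
        rw [if_pos rfl, if_pos rfl]
        set t := dotZ k α with ht
        have htM : |t| ≤ (M:ℝ) := by
          have : |t| ≤ ∑ i, |(k i : ℝ) * α i| := Finset.abs_sum_le_sum_abs _ _
          refine this.trans ?_
          rw [hM]
          push_cast
          apply Finset.sum_le_sum
          intro i _
          rw [abs_mul]
          have h1 : |α i| ≤ 1 := by
            rcases hcube i with ⟨h0, h1⟩
            rw [abs_of_nonneg h0]; linarith
          calc |(k i:ℝ)| * |α i| ≤ |(k i:ℝ)| * 1 := by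
                exact mul_le_mul_of_nonneg_left h1 (abs_nonneg _)
          _ = |(k i:ℝ)| := mul_one _
        set n : ℤ := ⌈t - 1/2⌉ with hn
        have hbr' : |t - n| < δ := hbr
        have hn1 : (t:ℝ) - 1/2 ≤ n := Int.le_ceil _
        have hn2 : (n:ℝ) < t - 1/2 + 1 := by
          have := Int.ceil_lt_add_one (t - 1/2)
          linarith
        have hnmem : n ∈ Finset.Icc (-(M+1)) (M+1) := by
          rw [Finset.mem_Icc]
          constructor
          · have : (-(M:ℝ)-1) < n := by linarith [abs_le.mp htM]
            have : ((-(M+1) : ℤ) : ℝ) < n := by push_cast; linarith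
            exact_mod_cast this.le
          · have : (n:ℝ) < (M:ℝ)+1 := by linarith [abs_le.mp htM]
            have : (n:ℝ) ≤ ((M+1 : ℤ) : ℝ) := by push_cast; linarith
            exact_mod_cast this
        refine Set.mem_biUnion hnmem ?_
        rcases abs_lt.mp hbr' with ⟨ha, hb⟩
        exact ⟨by linarith, by linarith⟩
      · show (if i = i₀ then dotZ k α else α i) ∈ (if i = i₀ then B else Set.Ico (0:ℝ) 1)
        rw [if_neg h, if_neg h]
        exact hcube i
    -- measure computation
    have hdet : LinearMap.det (Lmap d k i₀) ≠ 0 := by rw [Lmap_det]; exact hki₀'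
    have hboxvol : volume ((MeasurableEquiv.toLp 2 (Fin d → ℝ)).symm ⁻¹' box) = volume B := by
      rw [(EuclideanSpace.volume_preserving_symm_measurableEquiv_toLp (Fin d)).measure_preimage
        hboxmeas.nullMeasurableSet, hbox, volume_pi_pi]
      have hvol1 : ∀ i, volume (if i = i₀ then B else Set.Ico (0:ℝ) 1)
          = if i = i₀ then volume B else 1 := by
        intro i; by_cases h : i = i₀ <;> simp [h]
      simp_rw [hvol1]
      simp
    have hBvol : volume B ≤ ENNReal.ofReal ((2*M+3) * (2*δ)) := by
      calc volume B ≤ ∑ n ∈ Finset.Icc (-(M+1)) (M+1), volume (Set.Ioo ((n:ℝ)-δ) ((n:ℝ)+δ)) :=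
            measure_biUnion_finset_le _ _
      _ = (Finset.Icc (-(M+1)) (M+1)).card • ENNReal.ofReal (2*δ) := by
            apply Finset.sum_congr rfl ?_ |>.trans (Finset.sum_const _)
            intro n _
            rw [Real.volume_Ioo]
            congr 1; ring
      _ ≤ ENNReal.ofReal ((2*M+3) * (2*δ)) := by
            have hcard : (Finset.Icc (-(M+1)) (M+1)).card = (2*M+3).toNat := by
              rw [Int.card_Icc]; congr 1; ring
            have h1 : ((((2*M+3).toNat : ℕ)) : ℝ≥0∞)
                = ENNReal.ofReal (((2*M+3).toNat : ℕ) : ℝ) := (ENNReal.ofReal_natCast _).symm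
            rw [hcard, nsmul_eq_mul, h1, ← ENNReal.ofReal_mul (by positivity)]
            apply ENNReal.ofReal_le_ofReal
            apply le_of_eq
            rw [show (((2*M+3).toNat : ℕ) : ℝ) = ((2*M+3 : ℤ) : ℝ) by
              rw [← Int.cast_natCast, Int.toNat_of_nonneg (by linarith)]]
            push_cast; ring
    -- final assembly
    have ha1 : (1:ℝ) ≤ |(k i₀ : ℝ)| := by
      rw [← Int.cast_abs]; exact_mod_cast hki₀
    have hMr : (M:ℝ) ≤ d * |(k i₀ : ℝ)| := by
      rw [← Int.cast_abs]; exact_mod_cast hMd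
    have hM1r : (1:ℝ) ≤ (M:ℝ) := by exact_mod_cast hM1
    calc volume {α : EuclideanSpace ℝ (Fin d) | α ∈ cube d ∧ |bracket (dotZ k α)| < δ}
        ≤ volume ((Lmap d k i₀) ⁻¹' ((MeasurableEquiv.toLp 2 (Fin d → ℝ)).symm ⁻¹' box)) :=
          measure_mono hsub
    _ = ENNReal.ofReal |(LinearMap.det (Lmap d k i₀))⁻¹|
          * volume ((MeasurableEquiv.toLp 2 (Fin d → ℝ)).symm ⁻¹' box) :=
          Measure.addHaar_preimage_linearMap volume hdet _
    _ = ENNReal.ofReal |((k i₀:ℝ))⁻¹| * volume B := by rw [Lmap_det, hboxvol]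
    _ ≤ ENNReal.ofReal |((k i₀:ℝ))⁻¹| * ENNReal.ofReal ((2*M+3) * (2*δ)) :=
          mul_le_mul_right hBvol _
    _ = ENNReal.ofReal (|((k i₀:ℝ))⁻¹| * ((2*M+3) * (2*δ))) :=
          (ENNReal.ofReal_mul (abs_nonneg _)).symm
    _ ≤ ENNReal.ofReal (10 * d * δ) := by
          apply ENNReal.ofReal_le_ofReal
          rw [abs_inv]
          set a := |(k i₀ : ℝ)| with hadef
          have hainv : a⁻¹ * a = 1 := inv_mul_cancel₀ (by linarith)
          have hainvle : a⁻¹ ≤ 1 := by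
            rw [inv_le_one_iff₀]; right; linarith
          have hainvpos : 0 < a⁻¹ := by positivity
          calc a⁻¹ * ((2*M+3) * (2*δ)) ≤ a⁻¹ * ((5*M) * (2*δ)) := by
                apply mul_le_mul_of_nonneg_left _ (le_of_lt hainvpos)
                apply mul_le_mul_of_nonneg_right _ (by positivity)
                linarith
          _ ≤ a⁻¹ * ((5*(d*a)) * (2*δ)) := by
                apply mul_le_mul_of_nonneg_left _ (le_of_lt hainvpos)
                apply mul_le_mul_of_nonneg_right _ (by positivity)
                linarith
          _ = 10 * d * δ := by
                field_simp
                ring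

lemma znorm_nonneg {d : ℕ} (k : Fin d → ℤ) : 0 ≤ znorm k := Real.sqrt_nonneg _

lemma abs_coord_le_znorm {d : ℕ} (k : Fin d → ℤ) (i : Fin d) : |(k i : ℝ)| ≤ znorm k := by
  rw [← Real.sqrt_sq_eq_abs]
  apply Real.sqrt_le_sqrt
  exact Finset.single_le_sum (f := fun i => ((k i : ℝ))^2) (fun i _ => sq_nonneg _)
    (Finset.mem_univ i)

lemma one_le_znorm {d : ℕ} {k : Fin d → ℤ} (hk : k ≠ 0) : 1 ≤ znorm k := by
  obtain ⟨j, hj⟩ : ∃ j, k j ≠ 0 := by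
    by_contra h; push_neg at h; exact hk (funext h)
  have h1 : (1:ℝ) ≤ |(k j : ℝ)| := by
    rw [← Int.cast_abs]; exact_mod_cast Int.one_le_abs hj
  linarith [abs_coord_le_znorm k j]

def Kfin (d : ℕ) (R : ℝ) : Finset (Fin d → ℤ) :=
  (Fintype.piFinset (fun _ => Finset.Icc (-⌈R⌉) ⌈R⌉)).filter (fun k => k ≠ 0 ∧ znorm k < R)

lemma mem_Kfin {d : ℕ} {R : ℝ} {k : Fin d → ℤ} (hk : k ≠ 0) (hz : znorm k < R) :
    k ∈ Kfin d R := by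
  rw [Kfin, Finset.mem_filter]
  refine ⟨?_, hk, hz⟩
  rw [Fintype.mem_piFinset]
  intro i
  rw [Finset.mem_Icc]
  have := abs_coord_le_znorm k i
  have hR : |(k i : ℝ)| ≤ R := by linarith
  have h2 : ((|k i| : ℤ) : ℝ) ≤ (⌈R⌉ : ℝ) := by
    rw [Int.cast_abs]; exact hR.trans (Int.le_ceil R)
  have h3 : |k i| ≤ ⌈R⌉ := by exact_mod_cast h2
  rcases abs_le.mp h3 with ⟨ha, hb⟩
  exact ⟨by linarith, hb⟩

lemma pow_rpow_helper (j : ℕ) (y : ℝ) : ((2:ℝ)^j) ^ y = (2:ℝ) ^ ((j:ℝ) * y) := by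
  rw [← Real.rpow_natCast 2 j, ← Real.rpow_mul (by norm_num)]

lemma sum_inv_znorm (d : ℕ) (hd : 2 ≤ d) : ∃ C : ℝ, 0 ≤ C ∧ ∀ R : ℝ, 0 ≤ R →
    ∑ k ∈ Kfin d R, znorm k ^ (-(((d:ℝ)+1)/2)) ≤ C * R ^ (((d:ℝ)-1)/2) := by
  classical
  have hd' : (2:ℝ) ≤ (d:ℝ) := by exact_mod_cast hd
  set s : ℝ := ((d:ℝ)+1)/2 with hs
  set q : ℝ := ((d:ℝ)-1)/2 with hq
  have hq2 : 2⁻¹ ≤ q := by rw [hq]; linarith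
  have hq0 : 0 < q := by linarith
  have hsq : (d:ℝ) - s = q := by rw [hs, hq]; ring
  have hsqrt2 : (1:ℝ) < Real.sqrt 2 := by
    rw [show (1:ℝ) = Real.sqrt 1 by simp]
    exact Real.sqrt_lt_sqrt (by norm_num) (by norm_num)
  set r : ℝ := (2:ℝ) ^ q with hr
  have hr2 : Real.sqrt 2 ≤ r := by
    rw [hr, Real.sqrt_eq_rpow]
    exact Real.rpow_le_rpow_of_exponent_le (by norm_num) (by linarith)
  have hr1 : 1 < r := lt_of_lt_of_le hsqrt2 hr2
  set A : ℝ := (2:ℝ) ^ (3*(d:ℝ)) with hA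
  have hA0 : 0 < A := Real.rpow_pos_of_pos (by norm_num) _
  have hC0 : (0:ℝ) ≤ A * (2:ℝ)^q / (Real.sqrt 2 - 1) := by
    apply div_nonneg
    · positivity
    · linarith
  refine ⟨A * (2:ℝ)^q / (Real.sqrt 2 - 1), hC0, ?_⟩
  intro R hR0
  by_cases hR1 : R ≤ 1
  · have : Kfin d R = ∅ := by
      apply Finset.eq_empty_of_forall_notMem
      intro k hk
      rw [Kfin, Finset.mem_filter] at hk
      have := one_le_znorm hk.2.1
      linarith [hk.2.2]
    rw [this, Finset.sum_empty]
    exact mul_nonneg hC0 (Real.rpow_nonneg hR0 _)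
  · push_neg at hR1
    set J : ℕ := ⌈Real.logb 2 R⌉₊ with hJ
    have hlogb0 : 0 ≤ Real.logb 2 R := Real.logb_nonneg (by norm_num) hR1.le
    have hRJ : R ≤ (2:ℝ)^J := by
      have h1 : Real.logb 2 R ≤ (J:ℝ) := Nat.le_ceil _
      calc R = (2:ℝ) ^ (Real.logb 2 R) := (Real.rpow_logb (by norm_num) (by norm_num) (by linarith)).symm
      _ ≤ (2:ℝ) ^ ((J:ℝ)) := Real.rpow_le_rpow_of_exponent_le (by norm_num) h1
      _ = (2:ℝ)^J := Real.rpow_natCast 2 J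
    have hJR : ((2:ℝ)^J : ℝ) ≤ 2*R := by
      have h1 : (J:ℝ) ≤ Real.logb 2 R + 1 := le_of_lt (Nat.ceil_lt_add_one hlogb0)
      calc ((2:ℝ)^J : ℝ) = (2:ℝ) ^ ((J:ℝ)) := (Real.rpow_natCast 2 J).symm
      _ ≤ (2:ℝ) ^ (Real.logb 2 R + 1) := Real.rpow_le_rpow_of_exponent_le (by norm_num) h1
      _ = (2:ℝ) ^ (Real.logb 2 R) * 2 := by
          rw [Real.rpow_add (by norm_num), Real.rpow_one]
      _ = 2*R := by rw [Real.rpow_logb (by norm_num) (by norm_num) (by linarith)]; ring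
    set shell : ℕ → Finset (Fin d → ℤ) := fun j =>
      (Kfin d R).filter (fun k => (2:ℝ)^j ≤ znorm k ∧ znorm k < (2:ℝ)^(j+1)) with hshell
    have hsub : Kfin d R ⊆ (Finset.range J).biUnion shell := by
      intro k hk
      rw [Kfin, Finset.mem_filter] at hk
      obtain ⟨-, hk0, hkR⟩ := hk
      have hz1 : 1 ≤ znorm k := one_le_znorm hk0
      have hz0 : 0 < znorm k := by linarith
      set j : ℕ := ⌊Real.logb 2 (znorm k)⌋₊ with hj
      have hlz : 0 ≤ Real.logb 2 (znorm k) := Real.logb_nonneg (by norm_num) hz1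
      have h2j : (2:ℝ)^j ≤ znorm k := by
        calc ((2:ℝ)^j : ℝ) = (2:ℝ) ^ ((j:ℝ)) := (Real.rpow_natCast 2 j).symm
        _ ≤ (2:ℝ) ^ (Real.logb 2 (znorm k)) :=
            Real.rpow_le_rpow_of_exponent_le (by norm_num) (Nat.floor_le hlz)
        _ = znorm k := Real.rpow_logb (by norm_num) (by norm_num) hz0
      have h2j' : znorm k < (2:ℝ)^(j+1) := by
        calc znorm k = (2:ℝ) ^ (Real.logb 2 (znorm k)) :=
            (Real.rpow_logb (by norm_num) (by norm_num) hz0).symm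
        _ < (2:ℝ) ^ (((j:ℝ)+1)) := by
            apply Real.rpow_lt_rpow_of_exponent_lt (by norm_num)
            have := Nat.lt_floor_add_one (Real.logb 2 (znorm k))
            push_cast
            linarith
        _ = (2:ℝ)^(j+1) := by rw [← Real.rpow_natCast 2 (j+1)]; push_cast; ring_nf
      have hjJ : j < J := by
        have h1 : (j:ℝ) ≤ Real.logb 2 (znorm k) := Nat.floor_le hlz
        have h2 : Real.logb 2 (znorm k) < Real.logb 2 R := by
          apply Real.logb_lt_logb (by norm_num) hz0 hkR
        have h3 : Real.logb 2 R ≤ (J:ℝ) := Nat.le_ceil _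
        exact_mod_cast lt_of_le_of_lt h1 (lt_of_lt_of_le h2 h3)
      apply Finset.mem_biUnion.mpr
      refine ⟨j, Finset.mem_range.mpr hjJ, ?_⟩
      rw [hshell, Finset.mem_filter]
      exact ⟨mem_Kfin hk0 hkR, h2j, h2j'⟩
    have hdisj : (↑(Finset.range J) : Set ℕ).PairwiseDisjoint shell := by
      intro i _ j _ hij
      apply Finset.disjoint_left.mpr
      intro k hki hkj
      rw [hshell, Finset.mem_filter] at hki hkj
      rcases lt_or_gt_of_ne hij with h | h
      · have : (2:ℝ)^(i+1) ≤ (2:ℝ)^j := pow_le_pow_right₀ (by norm_num) h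
        linarith [hki.2.2, hkj.2.1]
      · have : (2:ℝ)^(j+1) ≤ (2:ℝ)^i := pow_le_pow_right₀ (by norm_num) h
        linarith [hki.2.1, hkj.2.2]
    have hfnonneg : ∀ k : Fin d → ℤ, 0 ≤ znorm k ^ (-s) :=
      fun k => Real.rpow_nonneg (znorm_nonneg k) _
    -- per-shell bound
    have hshellbound : ∀ j : ℕ, ∑ k ∈ shell j, znorm k ^ (-s)
        ≤ (2:ℝ) ^ (((j:ℝ)+3)*(d:ℝ)) * (2:ℝ) ^ ((j:ℝ) * (-s)) := by
      intro j
      have hcard : ((shell j).card : ℝ) ≤ (2:ℝ) ^ (((j:ℝ)+3)*(d:ℝ)) := by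
        have hsub2 : shell j ⊆ Fintype.piFinset
            (fun _ : Fin d => Finset.Icc (-(2^(j+1) : ℤ)) (2^(j+1))) := by
          intro k hk
          rw [hshell, Finset.mem_filter] at hk
          rw [Fintype.mem_piFinset]
          intro i
          rw [Finset.mem_Icc]
          have h1 : |(k i : ℝ)| ≤ znorm k := abs_coord_le_znorm k i
          have h2 : |(k i : ℝ)| < (2:ℝ)^(j+1) := lt_of_le_of_lt h1 hk.2.2
          have h3 : |k i| ≤ 2^(j+1) := by
            have : ((|k i| : ℤ) : ℝ) ≤ ((2^(j+1) : ℤ) : ℝ) := by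
              rw [Int.cast_abs]; push_cast; linarith
            exact_mod_cast this
          rcases abs_le.mp h3 with ⟨ha, hb⟩
          exact ⟨ha, hb⟩
        have hcard2 := Finset.card_le_card hsub2
        rw [Fintype.card_piFinset] at hcard2
        simp only [Int.card_Icc] at hcard2
        have hTcast : ∀ i : Fin d, ((2^(j+1) : ℤ) + 1 - -(2^(j+1):ℤ)).toNat = (2*2^(j+1)+1 : ℤ).toNat := by
          intro i; congr 1; ring
        have : ((shell j).card : ℝ) ≤ (((2*2^(j+1)+1 : ℤ).toNat : ℝ)) ^ d := by
          calc ((shell j).card : ℝ) ≤ ((∏ _i : Fin d, ((2^(j+1) : ℤ) + 1 - -(2^(j+1):ℤ)).toNat : ℕ) : ℝ) := by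
                exact_mod_cast hcard2
          _ = (((2*2^(j+1)+1 : ℤ).toNat : ℝ)) ^ d := by
                rw [Finset.prod_congr rfl (fun i _ => hTcast i), Finset.prod_const]
                push_cast
                simp
        refine this.trans ?_
        have htn : (((2*2^(j+1)+1 : ℤ).toNat : ℝ)) = 2*(2:ℝ)^(j+1)+1 := by
          rw [show ((2*2^(j+1)+1 : ℤ)).toNat = ((2*2^(j+1)+1 : ℤ)).toNat from rfl]
          have h0 : (0:ℤ) ≤ 2*2^(j+1)+1 := by positivity
          rw [← Int.cast_natCast, Int.toNat_of_nonneg h0]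
          push_cast; ring
        rw [htn]
        have hbase : 2*(2:ℝ)^(j+1)+1 ≤ (2:ℝ)^(j+3) := by
          have h1 : (1:ℝ) ≤ (2:ℝ)^(j+1) := one_le_pow₀ (by norm_num)
          have h2 : (2:ℝ)^(j+3) = 4 * (2:ℝ)^(j+1) := by ring
          linarith
        calc (2*(2:ℝ)^(j+1)+1)^d ≤ ((2:ℝ)^(j+3))^d := by
              apply pow_le_pow_left₀ (by positivity) hbase
        _ = (2:ℝ)^((j+3)*d) := by rw [← pow_mul]
        _ = (2:ℝ) ^ ((((j+3)*d : ℕ)):ℝ) := (Real.rpow_natCast 2 _).symm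
        _ = (2:ℝ) ^ (((j:ℝ)+3)*(d:ℝ)) := by push_cast; ring_nf
      have hterm : ∀ k ∈ shell j, znorm k ^ (-s) ≤ ((2:ℝ)^j) ^ (-s) := by
        intro k hk
        rw [hshell, Finset.mem_filter] at hk
        refine Real.rpow_le_rpow_of_nonpos (by positivity) hk.2.1 ?_
        rw [hs]
        apply neg_nonpos.mpr
        positivity
      calc ∑ k ∈ shell j, znorm k ^ (-s) ≤ (shell j).card • (((2:ℝ)^j) ^ (-s)) :=
            Finset.sum_le_card_nsmul _ _ _ hterm
      _ = ((shell j).card : ℝ) * (((2:ℝ)^j) ^ (-s)) := nsmul_eq_mul _ _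
      _ ≤ (2:ℝ) ^ (((j:ℝ)+3)*(d:ℝ)) * (((2:ℝ)^j) ^ (-s)) :=
            mul_le_mul_of_nonneg_right hcard (Real.rpow_nonneg (by positivity) _)
      _ = (2:ℝ) ^ (((j:ℝ)+3)*(d:ℝ)) * (2:ℝ) ^ ((j:ℝ) * (-s)) := by
            rw [pow_rpow_helper]
    -- term equality
    have htermeq : ∀ j : ℕ, (2:ℝ) ^ (((j:ℝ)+3)*(d:ℝ)) * (2:ℝ) ^ ((j:ℝ)*(-s)) = A * r^j := by
      intro j
      have e1 : ((j:ℝ)+3)*(d:ℝ) + (j:ℝ)*(-s) = 3*(d:ℝ) + q*(j:ℝ) := by rw [← hsq]; ring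
      rw [← Real.rpow_add (by norm_num : (0:ℝ)<2), e1,
        Real.rpow_add (by norm_num : (0:ℝ)<2), hA]
      congr 1
      rw [hr, ← Real.rpow_natCast ((2:ℝ)^q : ℝ) j, ← Real.rpow_mul (by norm_num)]
    -- geometric sum
    have hgeom : ∑ j ∈ Finset.range J, A * r^j ≤ A * ((2:ℝ)^q * R^q) / (Real.sqrt 2 - 1) := by
      rw [← Finset.mul_sum, geom_sum_eq hr1.ne' J]
      have hrJ : r^J ≤ (2:ℝ)^q * R^q := by
        have h1 : r^J = ((2:ℝ)^J : ℝ)^q := by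
          rw [hr, ← Real.rpow_natCast ((2:ℝ)^q : ℝ) J, ← Real.rpow_mul (by norm_num),
            mul_comm, pow_rpow_helper]
        rw [h1, ← Real.mul_rpow (by norm_num) hR0]
        exact Real.rpow_le_rpow (by positivity) hJR hq0.le
      have hnum : r^J - 1 ≤ (2:ℝ)^q * R^q := by linarith
      have hden : Real.sqrt 2 - 1 ≤ r - 1 := by linarith
      have h2 : (r^J - 1)/(r-1) ≤ ((2:ℝ)^q * R^q)/(Real.sqrt 2 - 1) := by
        apply div_le_div₀ ?_ hnum (by linarith) hden
        positivity
      calc A * ((r^J - 1)/(r-1)) ≤ A * (((2:ℝ)^q * R^q)/(Real.sqrt 2 - 1)) :=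
            mul_le_mul_of_nonneg_left h2 hA0.le
      _ = A * ((2:ℝ)^q * R^q) / (Real.sqrt 2 - 1) := by ring
    calc ∑ k ∈ Kfin d R, znorm k ^ (-s)
        ≤ ∑ k ∈ (Finset.range J).biUnion shell, znorm k ^ (-s) :=
          Finset.sum_le_sum_of_subset_of_nonneg hsub (fun k _ _ => hfnonneg k)
    _ = ∑ j ∈ Finset.range J, ∑ k ∈ shell j, znorm k ^ (-s) := Finset.sum_biUnion hdisj
    _ ≤ ∑ j ∈ Finset.range J, A * r^j := by
          apply Finset.sum_le_sum
          intro j _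
          rw [← htermeq j]
          exact hshellbound j
    _ ≤ A * ((2:ℝ)^q * R^q) / (Real.sqrt 2 - 1) := hgeom
    _ = A * (2:ℝ)^q / (Real.sqrt 2 - 1) * R^q := by ring


end Aux

theorem measure_of_bad_alphas
    (d : ℕ) (hd : 2 ≤ d) :
    ∃ Cd : ℝ, ∀ ε : ℝ, ε ∈ Set.Ioo (0:ℝ) 1 → ∀ N : ℕ,
      volume {α : EuclideanSpace ℝ (Fin d) | α ∈ cube d ∧
        ∃ k : Fin d → ℤ, k ≠ 0 ∧
          znorm k ^ 2 < ε ^ (((d:ℝ)+4)/((d:ℝ)-1)) * (N:ℝ) ^ ((2:ℝ)/(d:ℝ)) ∧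
          znorm k ^ (((d:ℝ)+1)/2) * |bracket (dotZ k α)| <
            ε ^ (-(d:ℝ)/4) * (N:ℝ) ^ (-(((d:ℝ)-1)/(2*(d:ℝ))))}
      ≤ ENNReal.ofReal (Cd * ε) := by
  classical
  obtain ⟨C, hC0, hCsum⟩ := sum_inv_znorm d hd
  refine ⟨10 * d * C, ?_⟩
  rintro ε ⟨hε0, hε1⟩ N
  have hd2 : (2:ℝ) ≤ (d:ℝ) := by exact_mod_cast hd
  have hdpos : (0:ℝ) < d := by linarith
  set s : ℝ := ((d:ℝ)+1)/2 with hs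
  set q : ℝ := ((d:ℝ)-1)/2 with hq
  set γ : ℝ := ((d:ℝ)-1)/(2*(d:ℝ)) with hγ
  rcases Nat.eq_zero_or_pos N with hN0 | hNpos
  · subst hN0
    have hempty : {α : EuclideanSpace ℝ (Fin d) | α ∈ cube d ∧
        ∃ k : Fin d → ℤ, k ≠ 0 ∧
          znorm k ^ 2 < ε ^ (((d:ℝ)+4)/((d:ℝ)-1)) * ((0:ℕ):ℝ) ^ ((2:ℝ)/(d:ℝ)) ∧
          znorm k ^ (((d:ℝ)+1)/2) * |bracket (dotZ k α)| <
            ε ^ (-(d:ℝ)/4) * ((0:ℕ):ℝ) ^ (-(((d:ℝ)-1)/(2*(d:ℝ))))} = ∅ := by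
      apply Set.eq_empty_iff_forall_notMem.mpr
      rintro α ⟨-, k, -, hk2, -⟩
      rw [Nat.cast_zero, Real.zero_rpow (by positivity), mul_zero] at hk2
      exact absurd hk2 (not_lt.mpr (sq_nonneg _))
    rw [hempty, measure_empty]
    exact zero_le
  · have hN1 : (1:ℝ) ≤ (N:ℝ) := by exact_mod_cast hNpos
    have hNr : (0:ℝ) < (N:ℝ) := by linarith
    set p : ℝ := ((d:ℝ)+4)/(2*((d:ℝ)-1)) with hp
    set R : ℝ := ε ^ p * (N:ℝ) ^ ((1:ℝ)/(d:ℝ)) with hR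
    have hR0 : 0 < R := mul_pos (Real.rpow_pos_of_pos hε0 _) (Real.rpow_pos_of_pos hNr _)
    have hR2 : ε ^ (((d:ℝ)+4)/((d:ℝ)-1)) * (N:ℝ) ^ ((2:ℝ)/(d:ℝ)) = R ^ 2 := by
      have h1 : R ^ 2 = (ε^p * ε^p) * ((N:ℝ)^((1:ℝ)/(d:ℝ)) * (N:ℝ)^((1:ℝ)/(d:ℝ))) := by
        rw [hR]; ring
      rw [h1, ← Real.rpow_add hε0, ← Real.rpow_add hNr]
      have hd1 : (d:ℝ) - 1 ≠ 0 := by linarith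
      have hdne : (d:ℝ) ≠ 0 := ne_of_gt hdpos
      congr 1
      · congr 1
        rw [hp]
        field_simp
        ring
      · congr 1
        field_simp
        ring
    set δfun : (Fin d → ℤ) → ℝ :=
      fun k => ε ^ (-(d:ℝ)/4) * (N:ℝ) ^ (-γ) * znorm k ^ (-s) with hδfun
    have hδ0 : ∀ k, 0 ≤ δfun k := by
      intro k
      apply mul_nonneg (mul_nonneg (Real.rpow_nonneg hε0.le _) (Real.rpow_nonneg hNr.le _))
      exact Real.rpow_nonneg (znorm_nonneg k) _
    -- inclusion into finite union
    have hsub : {α : EuclideanSpace ℝ (Fin d) | α ∈ cube d ∧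
        ∃ k : Fin d → ℤ, k ≠ 0 ∧
          znorm k ^ 2 < ε ^ (((d:ℝ)+4)/((d:ℝ)-1)) * ((N:ℕ):ℝ) ^ ((2:ℝ)/(d:ℝ)) ∧
          znorm k ^ (((d:ℝ)+1)/2) * |bracket (dotZ k α)| <
            ε ^ (-(d:ℝ)/4) * ((N:ℕ):ℝ) ^ (-(((d:ℝ)-1)/(2*(d:ℝ))))}
        ⊆ ⋃ k ∈ Kfin d R, {α : EuclideanSpace ℝ (Fin d) | α ∈ cube d ∧
            |bracket (dotZ k α)| < δfun k} := by
      rintro α ⟨hcube, k, hk0, hk2, hk3⟩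
      have hzR : znorm k < R := by
        rw [hR2] at hk2
        exact lt_of_pow_lt_pow_left₀ 2 hR0.le hk2
      have hz1 : 1 ≤ znorm k := one_le_znorm hk0
      have hzs : 0 < znorm k ^ s := Real.rpow_pos_of_pos (by linarith) s
      have hbr : |bracket (dotZ k α)| < δfun k := by
        rw [hδfun]
        have h2 : |bracket (dotZ k α)| * znorm k ^ s <
            ε ^ (-(d:ℝ)/4) * (N:ℝ) ^ (-γ) := by
          rw [mul_comm]; exact hk3
        have h3 := (lt_div_iff₀ hzs).mpr h2
        rw [div_eq_mul_inv, ← Real.rpow_neg (znorm_nonneg k)] at h3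
        exact h3
      apply Set.mem_biUnion (mem_Kfin hk0 hzR)
      exact ⟨hcube, hbr⟩
    refine le_trans (measure_mono hsub) ?_
    refine le_trans (measure_biUnion_finset_le _ _) ?_
    have hcore : ∀ k ∈ Kfin d R,
        volume {α : EuclideanSpace ℝ (Fin d) | α ∈ cube d ∧ |bracket (dotZ k α)| < δfun k}
          ≤ ENNReal.ofReal (10 * d * δfun k) := by
      intro k hk
      rw [Kfin, Finset.mem_filter] at hk
      exact core_measure d (le_trans one_le_two hd) k hk.2.1 (δfun k) (hδ0 k)
    refine le_trans (Finset.sum_le_sum hcore) ?_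
    rw [← ENNReal.ofReal_sum_of_nonneg (fun k _ => mul_nonneg (by positivity) (hδ0 k))]
    apply ENNReal.ofReal_le_ofReal
    -- real computation
    have hsum2 : ∑ k ∈ Kfin d R, 10 * (d:ℝ) * δfun k
        = 10 * d * (ε ^ (-(d:ℝ)/4) * (N:ℝ) ^ (-γ)) * ∑ k ∈ Kfin d R, znorm k ^ (-s) := by
      rw [Finset.mul_sum]
      apply Finset.sum_congr rfl
      intro k _
      rw [hδfun]
      ring
    rw [hsum2]
    have hRq : R ^ q = ε ^ (((d:ℝ)+4)/4) * (N:ℝ) ^ γ := by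
      rw [hR, Real.mul_rpow (Real.rpow_nonneg hε0.le _) (Real.rpow_nonneg hNr.le _),
        ← Real.rpow_mul hε0.le, ← Real.rpow_mul hNr.le]
      have hd1 : (d:ℝ) - 1 ≠ 0 := by linarith
      have hdne : (d:ℝ) ≠ 0 := ne_of_gt hdpos
      congr 1
      · congr 1
        rw [hp, hq, div_mul_div_comm]
        rw [div_eq_div_iff (by nlinarith) (by norm_num)]
        ring
      · congr 1
        rw [hq, hγ, div_mul_div_comm, one_mul]
        ring_nf
    have hkey : 10 * (d:ℝ) * (ε ^ (-(d:ℝ)/4) * (N:ℝ) ^ (-γ)) * (C * R ^ q)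
        = 10 * d * C * ε := by
      rw [hRq]
      have h1 : 10 * (d:ℝ) * (ε ^ (-(d:ℝ)/4) * (N:ℝ) ^ (-γ)) *
          (C * (ε ^ (((d:ℝ)+4)/4) * (N:ℝ) ^ γ))
          = 10 * d * C * ((ε ^ (-(d:ℝ)/4) * ε ^ (((d:ℝ)+4)/4)) *
            ((N:ℝ) ^ (-γ) * (N:ℝ) ^ γ)) := by ring
      rw [h1, ← Real.rpow_add hε0, ← Real.rpow_add hNr,
        show -(d:ℝ)/4 + ((d:ℝ)+4)/4 = 1 by ring, show -γ + γ = 0 by ring,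
        Real.rpow_one, Real.rpow_zero, mul_one]
    calc 10 * (d:ℝ) * (ε ^ (-(d:ℝ)/4) * (N:ℝ) ^ (-γ)) * ∑ k ∈ Kfin d R, znorm k ^ (-s)
        ≤ 10 * (d:ℝ) * (ε ^ (-(d:ℝ)/4) * (N:ℝ) ^ (-γ)) * (C * R ^ q) := by
          apply mul_le_mul_of_nonneg_left (hCsum R hR0.le)
          positivity
    _ = 10 * d * C * ε := hkey

end
end

section
/- Let d ≥ 2 and let C ⊂ ℝ^d be a strictly convex analytic body with 0 in its interior, with support function P(t) = sup_{x∈C}(t,x). Then for every invertible linear map L of ℝ^d, the function f_L : ℝ → ℝ defined by f_L(δ) = P(L(1,δ,0,…,0)) is real-analytic on ℝ and is not a polynomial. -/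
open MeasureTheory Filter Pointwise
open scoped ENNReal RealInnerProductSpace Real

noncomputable section

/-- The vector `(u, v, 0, …, 0)` of `ℝ^d`. -/
def pairVec (d : ℕ) (u v : ℝ) : EuclideanSpace ℝ (Fin d) :=
  (EuclideanSpace.equiv (Fin d) ℝ).symm
    (fun i => if (i : ℕ) = 0 then u else if (i : ℕ) = 1 then v else 0)


section Aux

lemma pairVec_apply' {d : ℕ} (u v : ℝ) (i : Fin d) :
    pairVec d u v i = if (i : ℕ) = 0 then u else if (i : ℕ) = 1 then v else 0 := rfl

lemma pairVec_eq_single' {d : ℕ} (hd : 2 ≤ d) (u v : ℝ) :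
    pairVec d u v = EuclideanSpace.single (⟨0, by omega⟩ : Fin d) u
      + EuclideanSpace.single (⟨1, by omega⟩ : Fin d) v := by
  ext i
  have : (EuclideanSpace.single (⟨0, by omega⟩ : Fin d) u
      + EuclideanSpace.single (⟨1, by omega⟩ : Fin d) v) i
      = EuclideanSpace.single (⟨0, by omega⟩ : Fin d) u i
      + EuclideanSpace.single (⟨1, by omega⟩ : Fin d) v i := rfl
  rw [this, pairVec_apply', EuclideanSpace.single_apply, EuclideanSpace.single_apply]
  rcases i with ⟨n, hn⟩
  by_cases h0 : n = 0 <;> by_cases h1 : n = 1 <;> simp_all [Fin.ext_iff]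

lemma pairVec_affine' {d : ℕ} (δ : ℝ) :
    pairVec d 1 δ = pairVec d 1 0 + δ • pairVec d 0 1 := by
  ext i
  have h : (pairVec d 1 0 + δ • pairVec d 0 1) i = pairVec d 1 0 i + δ * pairVec d 0 1 i := rfl
  rw [h, pairVec_apply', pairVec_apply', pairVec_apply']
  by_cases h0 : (i:ℕ) = 0 <;> by_cases h1 : (i:ℕ) = 1 <;> simp_all

lemma pairVec_coord_le' {d : ℕ} (u v : ℝ) (i : Fin d) :
    |pairVec d u v i| ≤ ‖pairVec d u v‖ := by
  have h1 : ⟪EuclideanSpace.single i (1:ℝ), pairVec d u v⟫ = pairVec d u v i := by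
    rw [EuclideanSpace.inner_single_left]; simp
  calc |pairVec d u v i| = |⟪EuclideanSpace.single i (1:ℝ), pairVec d u v⟫| := by rw [h1]
    _ ≤ ‖EuclideanSpace.single i (1:ℝ)‖ * ‖pairVec d u v‖ := abs_real_inner_le_norm _ _
    _ = ‖pairVec d u v‖ := by rw [EuclideanSpace.norm_single]; simp

lemma pairVec_norm_le' {d : ℕ} (hd : 2 ≤ d) (u v : ℝ) :
    ‖pairVec d u v‖ ≤ |u| + |v| := by
  rw [pairVec_eq_single' hd]
  calc ‖_ + _‖ ≤ ‖EuclideanSpace.single (⟨0, by omega⟩ : Fin d) u‖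
      + ‖EuclideanSpace.single (⟨1, by omega⟩ : Fin d) v‖ := norm_add_le _ _
    _ = |u| + |v| := by rw [EuclideanSpace.norm_single, EuclideanSpace.norm_single]; simp

lemma suppFn_lower' {d : ℕ} {C : Set (EuclideanSpace ℝ (Fin d))} (hcomp : IsCompact C)
    {ε : ℝ} (hε : 0 < ε) (hball : Metric.ball (0 : EuclideanSpace ℝ (Fin d)) ε ⊆ C)
    (t : EuclideanSpace ℝ (Fin d)) : ε / 2 * ‖t‖ ≤ suppFn C t := by
  have bdd : BddAbove ((fun x => (inner ℝ t x : ℝ)) '' C) :=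
    (hcomp.image (continuous_const.inner continuous_id)).bddAbove
  by_cases ht : t = 0
  · subst ht
    have h0C : (0 : EuclideanSpace ℝ (Fin d)) ∈ C := hball (by simp [hε])
    have : (0:ℝ) ∈ (fun x => (inner ℝ (0 : EuclideanSpace ℝ (Fin d)) x : ℝ)) '' C :=
      ⟨0, h0C, by simp⟩
    have := le_csSup bdd this
    simpa [suppFn] using this
  · have htn : 0 < ‖t‖ := norm_pos_iff.mpr ht
    set x : EuclideanSpace ℝ (Fin d) := (ε / (2 * ‖t‖)) • t with hxdef
    have hxnorm : ‖x‖ = ε / 2 := by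
      rw [hxdef, norm_smul, Real.norm_eq_abs, abs_of_pos (by positivity)]
      field_simp
    have hxC : x ∈ C := hball (by rw [mem_ball_zero_iff, hxnorm]; linarith)
    have hinner : (inner ℝ t x : ℝ) = ε / 2 * ‖t‖ := by
      rw [hxdef, real_inner_smul_right, real_inner_self_eq_norm_sq]
      field_simp
    have : (ε / 2 * ‖t‖) ∈ (fun x => (inner ℝ t x : ℝ)) '' C := ⟨x, hxC, hinner⟩
    exact le_csSup bdd this

lemma suppFn_upper' {d : ℕ} {C : Set (EuclideanSpace ℝ (Fin d))} {R : ℝ}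
    (hR : ∀ x ∈ C, ‖x‖ ≤ R) (hR0 : 0 ≤ R)
    (t : EuclideanSpace ℝ (Fin d)) : suppFn C t ≤ R * ‖t‖ := by
  apply Real.sSup_le
  · rintro y ⟨x, hxC, rfl⟩
    calc (inner ℝ t x : ℝ) ≤ |(inner ℝ t x : ℝ)| := le_abs_self _
      _ ≤ ‖t‖ * ‖x‖ := abs_real_inner_le_norm _ _
      _ ≤ ‖t‖ * R := by
          exact mul_le_mul_of_nonneg_left (hR x hxC) (norm_nonneg t)
      _ = R * ‖t‖ := mul_comm _ _
  · positivity

lemma no_poly' (q : Polynomial ℝ) (m K : ℝ) (hm : 0 < m)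
    (h1 : ∀ δ : ℝ, m * |δ| ≤ q.eval δ) (h2 : ∀ δ : ℝ, q.eval δ ≤ K * (1 + |δ|)) : False := by
  by_cases hdeg : q.natDegree ≤ 1
  · set a := q.coeff 1
    set b := q.coeff 0
    have hq : q = Polynomial.C a * Polynomial.X + Polynomial.C b :=
      Polynomial.eq_X_add_C_of_natDegree_le_one hdeg
    set δ : ℝ := (|b| + 1) / m with hδdef
    have hδpos : 0 < δ := by positivity
    have e1 : m * δ = |b| + 1 := by rw [hδdef]; field_simp
    have h1' := h1 δ
    have h2' := h1 (-δ)
    rw [hq] at h1' h2'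
    simp [abs_of_pos hδpos, e1] at h1' h2'
    have : |b| + 1 ≤ b := by linarith
    have := le_abs_self b
    linarith
  · push_neg at hdeg
    have hq0 : q ≠ 0 := by
      intro h; rw [h] at hdeg; simp at hdeg
    have hlead : q.leadingCoeff ≠ 0 := Polynomial.leadingCoeff_ne_zero.mpr hq0
    have hK : 0 ≤ K := by
      have ha := h1 0; have hb := h2 0; simp at ha hb; linarith
    have hO1 : (fun x : ℝ => q.eval x) =O[Filter.atTop] fun x : ℝ => x := by
      rw [Asymptotics.isBigO_iff]
      refine ⟨2 * K, ?_⟩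
      filter_upwards [Filter.eventually_ge_atTop (1:ℝ)] with x hx
      have h0x : (0:ℝ) ≤ q.eval x := le_trans (by positivity) (h1 x)
      have hub : q.eval x ≤ K * (1 + x) := by
        have := h2 x; rwa [abs_of_nonneg (by linarith)] at this
      rw [Real.norm_eq_abs, Real.norm_eq_abs, abs_of_nonneg h0x, abs_of_nonneg (by linarith)]
      nlinarith
    have hE := Polynomial.isEquivalent_atTop_lead q
    have hO2 : (fun x : ℝ => q.leadingCoeff * x ^ q.natDegree) =O[Filter.atTop] fun x : ℝ => x :=
      hE.symm.isBigO.trans hO1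
    have hO3 : (fun x : ℝ => x ^ q.natDegree) =O[Filter.atTop] fun x : ℝ => x := by
      have := hO2.const_mul_left q.leadingCoeff⁻¹
      refine this.congr_left fun x => ?_
      field_simp
    rw [Asymptotics.isBigO_iff] at hO3
    obtain ⟨c, hc⟩ := hO3
    obtain ⟨x, hx1, hx2⟩ := (hc.and (Filter.eventually_ge_atTop (max c 1 + 1))).exists
    have hx1' : x ≥ 1 := by have := le_max_right c 1; linarith
    have hxc : x > c := by have := le_max_left c 1; linarith
    have hx0 : (0:ℝ) < x := by linarith
    have hp : x ^ 2 ≤ x ^ q.natDegree := pow_le_pow_right₀ hx1' hdeg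
    rw [Real.norm_eq_abs, Real.norm_eq_abs, abs_of_nonneg (by positivity),
      abs_of_nonneg (le_of_lt hx0)] at hx1
    nlinarith

end Aux

theorem support_function_section_analytic_not_polynomial
    (d : ℕ) (hd : 2 ≤ d) (C : StrictlyConvexAnalyticBody d)
    (h0 : (0 : EuclideanSpace ℝ (Fin d)) ∈ interior C.carrier)
    (L : EuclideanSpace ℝ (Fin d) ≃ₗ[ℝ] EuclideanSpace ℝ (Fin d)) :
    (∀ δ : ℝ, AnalyticAt ℝ (fun u : ℝ => suppFn C.carrier (L (pairVec d 1 u))) δ) ∧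
    ¬ ∃ q : Polynomial ℝ, ∀ δ : ℝ, suppFn C.carrier (L (pairVec d 1 δ)) = q.eval δ := by
  classical
  -- basic facts about pairVec
  have hpv1 : ∀ δ : ℝ, (1:ℝ) ≤ ‖pairVec d 1 δ‖ := by
    intro δ
    have := pairVec_coord_le' (1:ℝ) δ (⟨0, by omega⟩ : Fin d)
    rw [pairVec_apply'] at this
    simpa using this
  have hpvδ : ∀ δ : ℝ, |δ| ≤ ‖pairVec d 1 δ‖ := by
    intro δ
    have := pairVec_coord_le' (1:ℝ) δ (⟨1, by omega⟩ : Fin d)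
    rw [pairVec_apply'] at this
    simpa using this
  have hpvle : ∀ δ : ℝ, ‖pairVec d 1 δ‖ ≤ 1 + |δ| := by
    intro δ
    have := pairVec_norm_le' hd 1 δ
    simpa using this
  have hpvne : ∀ δ : ℝ, L (pairVec d 1 δ) ≠ 0 := by
    intro δ h
    have h0 : pairVec d 1 δ = 0 := (LinearEquiv.map_eq_zero_iff L).mp h
    have := congrArg (fun v : EuclideanSpace ℝ (Fin d) => v (⟨0, by omega⟩ : Fin d)) h0
    rw [pairVec_apply'] at this
    simp at this
  -- analyticity
  have hfun : (fun u : ℝ => L (pairVec d 1 u))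
      = fun u => L (pairVec d 1 0) + u • L (pairVec d 0 1) := by
    funext u
    rw [pairVec_affine' u, map_add, _root_.map_smul]
  have hg : ∀ δ : ℝ, AnalyticAt ℝ (fun u : ℝ => L (pairVec d 1 u)) δ := by
    intro δ
    rw [hfun]
    exact analyticAt_const.add ((analyticAt_id).smul analyticAt_const)
  have hana : ∀ δ : ℝ, AnalyticAt ℝ (fun u : ℝ => suppFn C.carrier (L (pairVec d 1 u))) δ := by
    intro δ
    have hsupp : AnalyticAt ℝ (suppFn C.carrier) (L (pairVec d 1 δ)) :=
      C.analyticSupport _ (by simp [hpvne δ])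
    have hcomp := AnalyticAt.comp (g := suppFn C.carrier)
      (f := fun u : ℝ => L (pairVec d 1 u)) (x := δ) hsupp (hg δ)
    exact hcomp
  refine ⟨hana, ?_⟩
  rintro ⟨q, hq⟩
  -- inner ball
  obtain ⟨ε, hε, hball⟩ := Metric.mem_nhds_iff.mp (mem_interior_iff_mem_nhds.mp h0)
  -- outer bound
  obtain ⟨R, hR⟩ := C.isCompact.isBounded.exists_norm_le
  set R' : ℝ := max R 0 with hR'def
  have hR'0 : 0 ≤ R' := le_max_right _ _
  have hR' : ∀ x ∈ C.carrier, ‖x‖ ≤ R' := fun x hx => le_trans (hR x hx) (le_max_left _ _)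
  -- operator norms
  set Lc := LinearMap.toContinuousLinearMap (L : EuclideanSpace ℝ (Fin d) →ₗ[ℝ] EuclideanSpace ℝ (Fin d)) with hLc
  set Ls := LinearMap.toContinuousLinearMap ((L.symm : EuclideanSpace ℝ (Fin d) ≃ₗ[ℝ] EuclideanSpace ℝ (Fin d)) : EuclideanSpace ℝ (Fin d) →ₗ[ℝ] EuclideanSpace ℝ (Fin d)) with hLs
  set B : ℝ := ‖Lc‖ with hBdef
  set A : ℝ := ‖Ls‖ with hAdef
  have hB : ∀ v, ‖L v‖ ≤ B * ‖v‖ := by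
    intro v
    have h := Lc.le_opNorm v
    rw [show Lc v = L v from rfl] at h
    exact h
  have hA : ∀ v, ‖v‖ ≤ A * ‖L v‖ := by
    intro v
    have h := Ls.le_opNorm (L v)
    rw [show Ls (L v) = L.symm (L v) from rfl, LinearEquiv.symm_apply_apply] at h
    exact h
  have hB0 : 0 ≤ B := norm_nonneg _
  have hApos : 0 < A := by
    by_contra h
    push_neg at h
    have h1 := hA (pairVec d 1 0)
    have h2 := hpv1 0
    nlinarith [norm_nonneg (L (pairVec d 1 0))]
  -- lower bound
  set m : ℝ := ε / (2 * A) with hmdef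
  have hm : 0 < m := by positivity
  have h1 : ∀ δ : ℝ, m * |δ| ≤ q.eval δ := by
    intro δ
    rw [← hq δ]
    have hlow := suppFn_lower' C.isCompact hε hball (L (pairVec d 1 δ))
    have hAL : |δ| ≤ A * ‖L (pairVec d 1 δ)‖ := le_trans (hpvδ δ) (hA _)
    have key : m * |δ| ≤ ε / 2 * ‖L (pairVec d 1 δ)‖ := by
      have h3 : m * |δ| ≤ m * (A * ‖L (pairVec d 1 δ)‖) :=
        mul_le_mul_of_nonneg_left hAL (le_of_lt hm)
      have h4 : m * (A * ‖L (pairVec d 1 δ)‖) = ε / 2 * ‖L (pairVec d 1 δ)‖ := by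
        rw [hmdef]
        field_simp
      linarith
    linarith
  -- upper bound
  set K : ℝ := R' * B with hKdef
  have h2 : ∀ δ : ℝ, q.eval δ ≤ K * (1 + |δ|) := by
    intro δ
    rw [← hq δ]
    have hup := suppFn_upper' hR' hR'0 (L (pairVec d 1 δ))
    have hBn : ‖L (pairVec d 1 δ)‖ ≤ B * (1 + |δ|) := by
      calc ‖L (pairVec d 1 δ)‖ ≤ B * ‖pairVec d 1 δ‖ := hB _
        _ ≤ B * (1 + |δ|) := mul_le_mul_of_nonneg_left (hpvle δ) hB0
    calc suppFn C.carrier (L (pairVec d 1 δ)) ≤ R' * ‖L (pairVec d 1 δ)‖ := hup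
      _ ≤ R' * (B * (1 + |δ|)) := mul_le_mul_of_nonneg_left hBn hR'0
      _ = K * (1 + |δ|) := by rw [hKdef]; ring
  exact no_poly' q m K hm h1 h2

end
end
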